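/- Let n ≥ 2 and consider the setoid on orientations of the complete graph on Fin n whose relation is R u v := Even (m u v). Then the quotient by this setoid has exactly two elements, i.e. its cardinality is 2. -/

import Mathlib

/-- An orientation of the complete graph on `X` assigns to each 2-element subset of `X`
one of its elements. -/
def GraphOrientation (X : Type*) [DecidableEq X] : Type _ :=
  (S : {S : Finset X // S.card = 2}) → {x : X // x ∈ S.val}

/-- The number `m u v` of relative inversions of two orientations: the number of 2-element
subsets on which they differ. -/
noncomputable def m {X : Type*} [Fintype X] [DecidableEq X] (u v : GraphOrientation X) : ℕ :=
  Nat.card {S : {S : Finset X // S.card = 2} // u S ≠ v S}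

section Aux

variable {X : Type*} [Fintype X] [DecidableEq X]

lemma key_two {S : Finset X} (hS : S.card = 2) {x y z : X}
    (hx : x ∈ S) (hy : y ∈ S) (hz : z ∈ S) (hxy : x ≠ y) (hyz : y ≠ z) : x = z := by
  obtain ⟨a, b, hab, rfl⟩ := Finset.card_eq_two.mp hS
  simp only [Finset.mem_insert, Finset.mem_singleton] at hx hy hz
  rcases hx with rfl|rfl <;> rcases hy with rfl|rfl <;> rcases hz with rfl|rfl <;> tauto

lemma m_eq_sum (u v : GraphOrientation X) :
    (m u v : ZMod 2) = ∑ S : {S : Finset X // S.card = 2},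
      (if u S ≠ v S then (1 : ZMod 2) else 0) := by
  classical
  rw [m, Nat.card_eq_fintype_card, Fintype.card_subtype, Finset.card_filter]
  push_cast
  apply Finset.sum_congr rfl
  intro S _
  split <;> simp

lemma m_add (u v w : GraphOrientation X) :
    (m u w : ZMod 2) = (m u v : ZMod 2) + (m v w : ZMod 2) := by
  rw [m_eq_sum, m_eq_sum, m_eq_sum, ← Finset.sum_add_distrib]
  apply Finset.sum_congr rfl
  intro S _
  have tw : ∀ x y z : {x : X // x ∈ S.val}, x ≠ y → y ≠ z → x = z := fun x y z hxy hyz =>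
    Subtype.ext (key_two S.2 x.2 y.2 z.2 (fun h => hxy (Subtype.ext h))
      (fun h => hyz (Subtype.ext h)))
  by_cases h1 : u S = v S <;> by_cases h2 : v S = w S
  · simp [h1, h2, h1.trans h2]
  · have : u S ≠ w S := fun h => h2 (h1.symm.trans h)
    simp [h1, h2, this]
  · have : u S ≠ w S := fun h => h1 (h.trans h2.symm)
    simp [h1, h2, this]
  · have h3 : ¬ u S ≠ w S := not_not.mpr (tw _ _ _ h1 h2)
    rw [if_neg h3, if_pos h1, if_pos h2]
    decide

lemma m_symm (u v : GraphOrientation X) : m u v = m v u :=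
  Nat.card_congr (Equiv.subtypeEquivRight (fun S => ne_comm))

lemma m_self (u : GraphOrientation X) : m u u = 0 := by
  simp [m]

lemma even_iff_cast_zero (k : ℕ) : Even k ↔ (k : ZMod 2) = 0 := by
  rw [even_iff_two_dvd, ← ZMod.natCast_eq_zero_iff]

end Aux

/-- For `n ≥ 2`, the quotient of the orientations of the complete graph on `Fin n` by the
equivalence relation `R u v := Even (m u v)` has exactly two elements. -/
theorem stmt_15 (n : ℕ) (hn : 2 ≤ n) :
    Nat.card (Quot (fun u v : GraphOrientation (Fin n) => Even (m u v))) = 2 := by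
  obtain ⟨k, rfl⟩ : ∃ k, n = k + 2 := ⟨n - 2, by omega⟩
  set X := Fin (k + 2)
  -- base orientation
  have hpos : ∀ S : {S : Finset X // S.card = 2}, S.val.Nonempty := fun S =>
    Finset.card_pos.mp (by rw [S.2]; norm_num)
  let u₀ : GraphOrientation X := fun S => ⟨S.val.min' (hpos S), Finset.min'_mem _ _⟩
  -- the flipped orientation
  have h01 : (0 : X) ≠ 1 := Fin.zero_ne_one
  let S₀ : {S : Finset X // S.card = 2} := ⟨{0, 1}, Finset.card_pair h01⟩
  obtain ⟨y, hy, hyne⟩ := Finset.exists_mem_ne (by rw [S₀.2]; norm_num) (u₀ S₀).val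
  let u₁ : GraphOrientation X := fun S =>
    if h : S = S₀ then ⟨y, by rw [h]; exact hy⟩ else u₀ S
  have hu₁S₀ : u₁ S₀ ≠ u₀ S₀ := by
    simp only [u₁, dif_pos]
    exact fun h => hyne (congrArg Subtype.val h)
  have hu₁ : ∀ S, S ≠ S₀ → u₁ S = u₀ S := fun S hS => dif_neg hS
  have hm1 : m u₀ u₁ = 1 := by
    rw [m, Nat.card_eq_fintype_card, Fintype.card_subtype]
    rw [show (Finset.univ.filter fun S => u₀ S ≠ u₁ S) = {S₀} from ?_, Finset.card_singleton]
    ext S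
    simp only [Finset.mem_filter, Finset.mem_univ, true_and, Finset.mem_singleton]
    constructor
    · intro h
      by_contra hS
      exact h (hu₁ S hS).symm
    · rintro rfl
      exact fun h => hu₁S₀ h.symm
  -- the parity map
  let F : Quot (fun u v : GraphOrientation X => Even (m u v)) → ZMod 2 :=
    Quot.lift (fun u => (m u₀ u : ZMod 2)) (by
      intro u v huv
      have h0 : (m u v : ZMod 2) = 0 := (even_iff_cast_zero _).mp huv
      have := m_add u₀ u v
      rw [h0, add_zero] at this
      exact this.symm)
  have hbij : Function.Bijective F := by
    constructor
    · intro a b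
      induction a using Quot.ind with | _ u =>
      induction b using Quot.ind with | _ v =>
      intro hab
      simp only [F] at hab
      apply Quot.sound
      rw [even_iff_cast_zero, m_add u u₀ v, m_symm u u₀, hab]
      exact CharTwo.add_self_eq_zero _
    · intro x
      fin_cases x
      · exact ⟨Quot.mk _ u₀, by simp [F, m_self]; rfl⟩
      · exact ⟨Quot.mk _ u₁, by simp [F, hm1]; rfl⟩
  rw [Nat.card_eq_of_bijective F hbij, Nat.card_eq_fintype_card, ZMod.card]
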